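/- arXiv:2109.05396 — 3 statements merged into one kernel-verified Lean document; each statement's English description precedes it below -/
import Mathlib

section
/- Let x_1,...,x_n ∈ [0,1] be agent locations, and for each agent let w_i(y) be either |y - x_i| (if the agent dislikes the single facility) or max(x_i, 1 - x_i) (if indifferent). Define ALG as the social welfare Σ_i w_i(y*) where y* = 0 if Σ_i x_i ≥ Σ_i (1-x_i) and y* = 1 otherwise, and OPT = max_{y ∈ [0,1]} Σ_i w_i(y). Then 2·ALG ≥ OPT. -/
theorem stmt3 (n : ℕ) (x : Fin n → ℝ) (hx : ∀ i, x i ∈ Set.Icc (0:ℝ) 1)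
    (S : Finset (Fin n))
    (w : Fin n → ℝ → ℝ)
    (hw : w = fun i y => if i ∈ S then |y - x i| else max (x i) (1 - x i))
    (ystar : ℝ)
    (hy : ystar = if (∑ i, x i) ≥ ∑ i, (1 - x i) then 0 else 1) :
    ∀ y ∈ Set.Icc (0:ℝ) 1, (∑ i, w i y) ≤ 2 * ∑ i, w i ystar := by
  intro y hyy
  obtain ⟨hy0, hy1⟩ := hyy
  subst hw
  set A : ℝ := ∑ i, (if i ∈ S then x i else max (x i) (1 - x i)) with hA
  set B : ℝ := ∑ i, (if i ∈ S then 1 - x i else max (x i) (1 - x i)) with hB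
  have hxi0 : ∀ i, (0:ℝ) ≤ x i := fun i => (hx i).1
  have hxi1 : ∀ i, x i ≤ 1 := fun i => (hx i).2
  have hA0 : (0:ℝ) ≤ A := by
    apply Finset.sum_nonneg
    intro i _
    by_cases h : i ∈ S
    · simpa [h] using hxi0 i
    · simp only [h, if_false]
      exact le_max_of_le_left (hxi0 i)
  have hB0 : (0:ℝ) ≤ B := by
    apply Finset.sum_nonneg
    intro i _
    by_cases h : i ∈ S
    · simp only [h, if_true]
      linarith [hxi1 i]
    · simp only [h, if_false]
      exact le_max_of_le_left (hxi0 i)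
  -- convexity bound
  have hconv : (∑ i, (if i ∈ S then |y - x i| else max (x i) (1 - x i)))
      ≤ (1 - y) * A + y * B := by
    rw [hA, hB, Finset.mul_sum, Finset.mul_sum, ← Finset.sum_add_distrib]
    apply Finset.sum_le_sum
    intro i _
    by_cases h : i ∈ S
    · simp only [h, if_true]
      have h0 := hxi0 i; have h1 := hxi1 i
      rw [abs_le]
      constructor <;> nlinarith
    · simp only [h, if_false]
      nlinarith [le_max_left (x i) (1 - x i)]
  have hmax : (1 - y) * A + y * B ≤ max A B := by
    have h1 : A ≤ max A B := le_max_left _ _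
    have h2 : B ≤ max A B := le_max_right _ _
    nlinarith
  have hax : (∑ i, x i) ≤ A := by
    rw [hA]
    apply Finset.sum_le_sum
    intro i _
    by_cases h : i ∈ S
    · simp [h]
    · simp only [h, if_false]
      exact le_max_left _ _
  have hbx : (∑ i, (1 - x i)) ≤ B := by
    rw [hB]
    apply Finset.sum_le_sum
    intro i _
    by_cases h : i ∈ S
    · simp [h]
    · simp only [h, if_false]
      exact le_max_right _ _
  have hab : B ≤ (∑ i, (1 - x i)) + A := by
    rw [hB, hA, ← Finset.sum_add_distrib]
    apply Finset.sum_le_sum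
    intro i _
    by_cases h : i ∈ S
    · simp only [h, if_true]
      linarith [hxi0 i]
    · simp only [h, if_false]
      linarith [hxi1 i]
  have hba : A ≤ (∑ i, x i) + B := by
    rw [hB, hA, ← Finset.sum_add_distrib]
    apply Finset.sum_le_sum
    intro i _
    by_cases h : i ∈ S
    · simp only [h, if_true]
      linarith [hxi1 i]
    · simp only [h, if_false]
      linarith [hxi0 i]
  by_cases hc : (∑ i, x i) ≥ ∑ i, (1 - x i)
  · have hys : ystar = 0 := by rw [hy, if_pos hc]
    have hval : (∑ i, (if i ∈ S then |ystar - x i| else max (x i) (1 - x i))) = A := by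
      rw [hys, hA]
      apply Finset.sum_congr rfl
      intro i _
      by_cases h : i ∈ S
      · simp only [h, if_true]
        rw [abs_of_nonpos (by linarith [hxi0 i])]
        ring
      · simp [h]
    rw [hval]
    have hBle : B ≤ 2 * A := by linarith
    calc (∑ i, (if i ∈ S then |y - x i| else max (x i) (1 - x i)))
        ≤ (1 - y) * A + y * B := hconv
      _ ≤ max A B := hmax
      _ ≤ 2 * A := max_le (by linarith) hBle
  · have hys : ystar = 1 := by rw [hy, if_neg hc]
    have hval : (∑ i, (if i ∈ S then |ystar - x i| else max (x i) (1 - x i))) = B := by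
      rw [hys, hB]
      apply Finset.sum_congr rfl
      intro i _
      by_cases h : i ∈ S
      · simp only [h, if_true]
        rw [abs_of_nonneg (by linarith [hxi1 i])]
      · simp [h]
    rw [hval]
    have hc' : (∑ i, x i) ≤ ∑ i, (1 - x i) := le_of_not_ge hc
    have hAle : A ≤ 2 * B := by linarith
    calc (∑ i, (if i ∈ S then |y - x i| else max (x i) (1 - x i)))
        ≤ (1 - y) * A + y * B := hconv
      _ ≤ max A B := hmax
      _ ≤ 2 * B := max_le hAle (by linarith)
end

section
/- Let x_1,...,x_n ∈ [0,1]^2. If q is a corner of the unit square maximizing Σ_i ‖x_i − q‖ over the four corners, then Σ_i ‖x_i − q‖ ≥ n/√2. -/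
lemma aux_sqrt (u v : ℝ) : (u + v) / Real.sqrt 2 ≤ Real.sqrt (u^2 + v^2) := by
  have h2 : (0:ℝ) < Real.sqrt 2 := by positivity
  have h1 : Real.sqrt ((u+v)^2/2) ≤ Real.sqrt (u^2+v^2) :=
    Real.sqrt_le_sqrt (by nlinarith [sq_nonneg (u-v)])
  have h3 : Real.sqrt ((u+v)^2/2) = |u+v| / Real.sqrt 2 := by
    rw [Real.sqrt_div' _ (by norm_num), Real.sqrt_sq_eq_abs]
  calc (u+v)/Real.sqrt 2 ≤ |u+v|/Real.sqrt 2 := by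
        gcongr; exact le_abs_self _
    _ ≤ _ := by rw [← h3]; exact h1

theorem stmt8 (n : ℕ) (x : Fin n → ℝ × ℝ)
    (hx : ∀ i, (x i).1 ∈ Set.Icc (0:ℝ) 1 ∧ (x i).2 ∈ Set.Icc (0:ℝ) 1)
    (dE : ℝ × ℝ → ℝ × ℝ → ℝ)
    (hdE : dE = fun p q => Real.sqrt ((p.1 - q.1)^2 + (p.2 - q.2)^2))
    (corners : Finset (ℝ × ℝ))
    (hcorners : corners = {(0,0), (0,1), (1,0), (1,1)})
    (q : ℝ × ℝ) (hq : q ∈ corners)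
    (hmax : ∀ p ∈ corners, ∑ i, dE (x i) p ≤ ∑ i, dE (x i) q) :
    (n : ℝ) / Real.sqrt 2 ≤ ∑ i, dE (x i) q := by
  have h2 : (0:ℝ) < Real.sqrt 2 := by positivity
  have h00 := hmax (0,0) (by rw [hcorners]; simp)
  have h11 := hmax (1,1) (by rw [hcorners]; simp)
  have key : (n : ℝ) * Real.sqrt 2 ≤ (∑ i, dE (x i) (0,0)) + ∑ i, dE (x i) (1,1) := by
    rw [← Finset.sum_add_distrib]
    calc (n : ℝ) * Real.sqrt 2 = ∑ _i : Fin n, Real.sqrt 2 := by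
          simp [Finset.sum_const]
      _ ≤ _ := by
        apply Finset.sum_le_sum
        intro i _
        subst hdE
        simp only
        have ha := aux_sqrt ((x i).1 - 0) ((x i).2 - 0)
        have hb := aux_sqrt (1 - (x i).1) (1 - (x i).2)
        have hs : Real.sqrt 2 = 2 / Real.sqrt 2 := by
          rw [eq_div_iff h2.ne', Real.mul_self_sqrt (by norm_num)]
        have hb' : (1 - (x i).1 + (1 - (x i).2)) / Real.sqrt 2
            ≤ Real.sqrt (((x i).1 - 1)^2 + ((x i).2 - 1)^2) := by
          convert hb using 3 <;> ring
        rw [hs]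
        have := add_le_add ha hb'
        rw [← add_div] at this
        calc (2:ℝ)/Real.sqrt 2 = ((x i).1 - 0 + ((x i).2 - 0) + (1 - (x i).1 + (1 - (x i).2)))/Real.sqrt 2 := by ring_nf
          _ ≤ _ := this
  have : (n : ℝ) * Real.sqrt 2 ≤ 2 * ∑ i, dE (x i) q := by
    linarith
  rw [div_le_iff₀ h2]
  nlinarith [Real.sq_sqrt (by norm_num : (0:ℝ) ≤ 2), Real.sqrt_nonneg 2]
end

section
/- In the weighted approval voting mechanism, no coalition can strictly benefit all its members by misreporting: let candidates be c_1,...,c_n, voters 1,...,m with weights w_i^+ ≥ w_i^- ≥ 0, true top tiers C_i ⊆ C, and approval A(j) = Σ_i (w_i^+ if c_j ∈ C_i else w_i^-), with winner the candidate maximizing A breaking ties by a fixed linear order. If a coalition U reports top tiers C'_i instead, yielding winner c_ℓ while the truthful winner is c_k, and every voter i in U strictly prefers c_ℓ to c_k (i.e., c_ℓ ∈ C_i and c_k ∉ C_i for all i ∈ U), then a contradiction arises: c_ℓ would not win. Formally: if c_k ∈ ∩_{i∈U} (C \ C_i) and c_ℓ ∈ ∩_{i∈U} C_i, and c_k wins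 under truthful reports, then c_ℓ does not win when only coalition U changes its reports. -/
theorem stmt15 (m n : ℕ) (wp wm : Fin m → ℝ)
    (hw : ∀ i, 0 ≤ wm i ∧ wm i ≤ wp i)
    (C C' : Fin m → Finset (Fin n))
    (prio : Fin n → ℕ) (hprio : Function.Injective prio)
    (U : Finset (Fin m)) (hU : U.Nonempty)
    (hout : ∀ i ∉ U, C' i = C i)
    (A A' : Fin n → ℝ)
    (hA : A = fun j => ∑ i, if j ∈ C i then wp i else wm i)
    (hA' : A' = fun j => ∑ i, if j ∈ C' i then wp i else wm i)
    (k l : Fin n)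
    (hkwin : ∀ j, j ≠ k → A j < A k ∨ (A j = A k ∧ prio k < prio j))
    (hkC : ∀ i ∈ U, k ∉ C i) (hlC : ∀ i ∈ U, l ∈ C i) :
    ¬ (∀ j, j ≠ l → A' j < A' l ∨ (A' j = A' l ∧ prio l < prio j)) := by
  intro hl
  have hlk : l ≠ k := by
    rintro rfl
    obtain ⟨i, hi⟩ := hU
    exact hkC i hi (hlC i hi)
  have h1 : A' l ≤ A l := by
    subst hA hA'
    apply Finset.sum_le_sum
    intro i _
    by_cases hiU : i ∈ U
    · simp [hlC i hiU]
      split <;> [exact le_refl _; exact (hw i).2]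
    · rw [hout i hiU]
  have h2 : A k ≤ A' k := by
    subst hA hA'
    apply Finset.sum_le_sum
    intro i _
    by_cases hiU : i ∈ U
    · simp [hkC i hiU]
      split <;> [exact (hw i).2; exact le_refl _]
    · rw [hout i hiU]
  rcases hkwin l hlk with h | ⟨heq, hp⟩
  · have := hl k hlk.symm
    rcases this with h' | ⟨_, hp'⟩
    · linarith
    · linarith
  · rcases hl k hlk.symm with h' | ⟨heq', hp'⟩
    · linarith
    · omega
end
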